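/- Integration by parts identity for local Bayes optimality: if b^p_i = ∂_i log p and v is a C¹ vector field compactly supported in D, then ∫_D [R(b^p + v) − R(b^p)] p = (1/2) ∫_D Σ_{i,j} v_i v_j V_{ij} p ≥ 0, where R(b) = Σ_{i,j}(∂_i(V_{ij} b_j) + (1/2) b_i b_j V_{ij}). -/

import Mathlib

open Real MeasureTheory

/-- Partial derivative `∂_i f x`. -/
noncomputable def pd {d : ℕ} (i : Fin d) (f : (Fin d → ℝ) → ℝ) (x : Fin d → ℝ) : ℝ :=
  fderiv ℝ f x (Pi.single i 1)

/-- The asymptotic risk of a decision function `b`: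
`R(b) = Σ_{ij}(∂_i(V_{ij} b_j) + ½ b_i b_j V_{ij})`. -/
noncomputable def Rb {d : ℕ} (V : Fin d → Fin d → (Fin d → ℝ) → ℝ)
    (b : Fin d → (Fin d → ℝ) → ℝ) (x : Fin d → ℝ) : ℝ :=
  ∑ i, ∑ j, (pd i (fun y => V i j y * b j y) x + (1/2) * b i x * b j x * V i j x)

/-- Gluing: a function continuous on an open set `D`, vanishing outside a closed
`K ⊆ D`, is continuous. -/
lemma glue_cont {d : ℕ} {D K : Set (Fin d → ℝ)} (hD : IsOpen D) (hKc : IsClosed K)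
    (hKD : K ⊆ D) {f : (Fin d → ℝ) → ℝ} (hf : ContinuousOn f D)
    (h0 : ∀ x ∉ K, f x = 0) : Continuous f := by
  rw [continuous_iff_continuousAt]
  intro x
  by_cases hx : x ∈ D
  · exact hf.continuousAt (hD.mem_nhds hx)
  · have hxK : x ∉ K := fun h => hx (hKD h)
    have h : f =ᶠ[nhds x] fun _ => (0 : ℝ) :=
      Filter.eventuallyEq_of_mem (hKc.isOpen_compl.mem_nhds hxK) (fun y hy => h0 y hy)
    exact continuousAt_const.congr h.symm

/-- Gluing: a function `C¹` on an open set `D`, vanishing outside a closed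
compact `K ⊆ D`, is `C¹` on the whole space. -/
lemma glue_c1 {d : ℕ} {D K : Set (Fin d → ℝ)} (hD : IsOpen D) (hKc : IsClosed K)
    (hKD : K ⊆ D) {f : (Fin d → ℝ) → ℝ} (hf : ContDiffOn ℝ 1 f D)
    (h0 : ∀ x ∉ K, f x = 0) : ContDiff ℝ 1 f := by
  have hz : ∀ x ∉ K, f =ᶠ[nhds x] fun _ => (0 : ℝ) := fun x hx =>
    Filter.eventuallyEq_of_mem (hKc.isOpen_compl.mem_nhds hx) (fun y hy => h0 y hy)
  rw [contDiff_one_iff_fderiv]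
  constructor
  · intro x
    by_cases hx : x ∈ D
    · exact (hf.differentiableOn one_ne_zero).differentiableAt (hD.mem_nhds hx)
    · exact (differentiableAt_const (0 : ℝ)).congr_of_eventuallyEq
        (hz x (fun h => hx (hKD h)))
  · rw [continuous_iff_continuousAt]
    intro x
    by_cases hx : x ∈ D
    · exact (hf.continuousOn_fderiv_of_isOpen hD le_rfl).continuousAt (hD.mem_nhds hx)
    · have hxK : x ∉ K := fun h => hx (hKD h)
      have hfd : (fun y => fderiv ℝ f y) =ᶠ[nhds x]
          fun _ => (0 : (Fin d → ℝ) →L[ℝ] ℝ) := by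
        filter_upwards [hKc.isOpen_compl.mem_nhds hxK] with y hy
        rw [(hz y hy).fderiv_eq]
        exact fderiv_const_apply 0
      exact continuousAt_const.congr hfd.symm

theorem stmt3 {d : ℕ} (D : Set (Fin d → ℝ)) (hD : IsOpen D)
    (V : Fin d → Fin d → (Fin d → ℝ) → ℝ)
    (hV : ∀ i j, ContDiffOn ℝ 1 (V i j) D)
    (hVsym : ∀ i j x, V i j x = V j i x)
    (hVpsd : ∀ x ∈ D, ∀ c : Fin d → ℝ, 0 ≤ ∑ i, ∑ j, c i * c j * V i j x)
    (p : (Fin d → ℝ) → ℝ) (hp : ContDiffOn ℝ 2 p D) (hppos : ∀ x ∈ D, 0 < p x)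
    (bp : Fin d → (Fin d → ℝ) → ℝ)
    (hbp : ∀ i x, bp i x = pd i (fun y => Real.log (p y)) x)
    (v : Fin d → (Fin d → ℝ) → ℝ) (hv : ∀ i, ContDiffOn ℝ 1 (v i) D)
    (K : Set (Fin d → ℝ)) (hK : IsCompact K) (hKD : K ⊆ D)
    (hsupp : ∀ i, ∀ x ∉ K, v i x = 0) :
    (∫ x in D, (Rb V (fun i y => bp i y + v i y) x - Rb V bp x) * p x)
        = (1/2) * ∫ x in D, (∑ i, ∑ j, v i x * v j x * V i j x) * p x ∧
      0 ≤ (1/2) * ∫ x in D, (∑ i, ∑ j, v i x * v j x * V i j x) * p x := by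
  classical
  have hp1 : ContDiffOn ℝ 1 p D := hp.of_le one_le_two
  set F : Fin d → (Fin d → ℝ) → ℝ := fun i x => ∑ j, V i j x * v j x * p x with hFdef
  -- regularity of F
  have hFD : ∀ i, ContDiffOn ℝ 1 (F i) D := fun i =>
    ContDiffOn.sum (fun j _ => ((hV i j).mul (hv j)).mul hp1)
  have hF0 : ∀ i, ∀ x ∉ K, F i x = 0 := by
    intro i x hx
    have h0 : ∀ j, v j x = 0 := fun j => hsupp j x hx
    simp [hFdef, h0]
  have hFc : ∀ i, ContDiff ℝ 1 (F i) := fun i =>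
    glue_c1 hD hK.isClosed hKD (hFD i) (hF0 i)
  have hfd0 : ∀ i, ∀ x ∉ K, fderiv ℝ (F i) x = 0 := by
    intro i x hx
    have hz : F i =ᶠ[nhds x] fun _ => (0 : ℝ) :=
      Filter.eventuallyEq_of_mem (hK.isClosed.isOpen_compl.mem_nhds hx)
        (fun y hy => hF0 i y hy)
    rw [hz.fderiv_eq]
    exact fderiv_const_apply 0
  have hpd0 : ∀ i, ∀ x ∉ K, pd i (F i) x = 0 := by
    intro i x hx; simp [pd, hfd0 i x hx]
  -- integrability
  have int_pd : ∀ i, Integrable (fun x => pd i (F i) x) := by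
    intro i
    have hc : Continuous fun x => pd i (F i) x := by
      simp only [pd]
      exact ((hFc i).continuous_fderiv one_ne_zero).clm_apply continuous_const
    exact hc.integrable_of_hasCompactSupport
      (HasCompactSupport.intro hK (fun x hx => hpd0 i x hx))
  have int_F : ∀ i, Integrable (F i) := fun i =>
    (hFc i).continuous.integrable_of_hasCompactSupport
      (HasCompactSupport.intro hK (fun x hx => hF0 i x hx))
  -- divergence integrals vanish
  have hzero : ∀ i, (∫ x, pd i (F i) x) = 0 := by
    intro i
    have h1 : Differentiable ℝ (fun _ : Fin d → ℝ => (1 : ℝ)) := differentiable_const 1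
    have key := integral_mul_fderiv_eq_neg_fderiv_mul_of_integrable
      (μ := volume) (f := fun _ : Fin d → ℝ => (1 : ℝ)) (g := F i) (v := Pi.single i 1)
      ?_ ?_ ?_ (fun x _ => h1 x) (fun x _ => (hFc i).differentiable one_ne_zero x)
    · simpa [pd, fderiv_const_apply] using key
    · simp only [fderiv_const_apply, ContinuousLinearMap.zero_apply, zero_mul]
      exact integrable_zero _ _ _
    · simp only [one_mul]
      simpa [pd] using int_pd i
    · simp only [one_mul]
      exact int_F i
  -- pointwise differentiability and identities on D
  have key : ∀ x ∈ D,
      (Rb V (fun i y => bp i y + v i y) x - Rb V bp x) * p x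
        = (∑ i, pd i (F i) x)
          + (1/2) * ((∑ i, ∑ j, v i x * v j x * V i j x) * p x) := by
    intro x hx
    have hdV : ∀ i j, DifferentiableAt ℝ (V i j) x := fun i j =>
      ((hV i j).differentiableOn one_ne_zero).differentiableAt (hD.mem_nhds hx)
    have hdv : ∀ j, DifferentiableAt ℝ (v j) x := fun j =>
      ((hv j).differentiableOn one_ne_zero).differentiableAt (hD.mem_nhds hx)
    have hdp : DifferentiableAt ℝ p x :=
      (hp1.differentiableOn one_ne_zero).differentiableAt (hD.mem_nhds hx)
    have hlogp : ContDiffOn ℝ 2 (fun y => Real.log (p y)) D :=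
      hp.log (fun y hy => (hppos y hy).ne')
    have hg : ContDiffOn ℝ 1 (fun y => fderiv ℝ (fun z => Real.log (p z)) y) D :=
      hlogp.fderiv_of_isOpen hD (by norm_num)
    have hbpeq : ∀ j, bp j = fun y => fderiv ℝ (fun z => Real.log (p z)) y (Pi.single j 1) := by
      intro j; funext y; rw [hbp j y]; rfl
    have hdbp : ∀ j, DifferentiableAt ℝ (bp j) x := by
      intro j
      rw [hbpeq j]
      exact ((hg.clm_apply contDiffOn_const).differentiableOn one_ne_zero).differentiableAt
        (hD.mem_nhds hx)
    have h3 : ∀ i, bp i x * p x = pd i p x := by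
      intro i
      have hlog : HasFDerivAt (fun z => Real.log (p z)) ((p x)⁻¹ • fderiv ℝ p x) x :=
        hdp.hasFDerivAt.log (hppos x hx).ne'
      have : bp i x = (p x)⁻¹ * pd i p x := by
        rw [hbp i x]
        simp only [pd, hlog.fderiv]
        simp [smul_eq_mul]
      rw [this, pd]
      rw [inv_mul_eq_div, div_mul_eq_mul_div]
      exact mul_div_cancel_right₀ _ (hppos x hx).ne'
    have h1 : ∀ i j, pd i (fun y => V i j y * (bp j y + v j y)) x
        = pd i (fun y => V i j y * bp j y) x + pd i (fun y => V i j y * v j y) x := by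
      intro i j
      have e1 : (fun y => V i j y * (bp j y + v j y))
          = fun y => V i j y * bp j y + V i j y * v j y := by funext y; ring
      simp only [pd, e1]
      rw [fderiv_fun_add ((hdV i j).fun_mul (hdbp j)) ((hdV i j).fun_mul (hdv j))]
      simp
    have h2 : ∀ i j, pd i (fun y => V i j y * v j y * p y) x
        = pd i (fun y => V i j y * v j y) x * p x + V i j x * v j x * pd i p x := by
      intro i j
      simp only [pd]
      rw [fderiv_fun_mul ((hdV i j).fun_mul (hdv j)) hdp]
      simp only [ContinuousLinearMap.add_apply, ContinuousLinearMap.smul_apply, smul_eq_mul]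
      ring
    have pdF : ∀ i, pd i (F i) x = ∑ j, pd i (fun y => V i j y * v j y * p y) x := by
      intro i
      simp only [pd, hFdef]
      rw [fderiv_fun_sum (fun j _ => ((hdV i j).fun_mul (hdv j)).fun_mul hdp)]
      simp
    have hRb : Rb V (fun i y => bp i y + v i y) x - Rb V bp x
        = (∑ i, ∑ j, pd i (fun y => V i j y * v j y) x)
          + (1/2) * (∑ i, ∑ j, bp i x * v j x * V i j x)
          + (1/2) * (∑ i, ∑ j, v i x * bp j x * V i j x)
          + (1/2) * (∑ i, ∑ j, v i x * v j x * V i j x) := by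
      have : Rb V (fun i y => bp i y + v i y) x - Rb V bp x
          = ∑ i, ∑ j, (pd i (fun y => V i j y * v j y) x
            + (1/2) * (bp i x * v j x * V i j x)
            + (1/2) * (v i x * bp j x * V i j x)
            + (1/2) * (v i x * v j x * V i j x)) := by
        simp only [Rb, ← Finset.sum_sub_distrib]
        refine Finset.sum_congr rfl fun i _ => Finset.sum_congr rfl fun j _ => ?_
        rw [h1 i j]; ring
      rw [this]
      simp only [Finset.sum_add_distrib, ← Finset.mul_sum]
    have hswap : (∑ i, ∑ j, v i x * bp j x * V i j x)
        = ∑ i, ∑ j, bp i x * v j x * V i j x := by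
      rw [Finset.sum_comm]
      refine Finset.sum_congr rfl fun i _ => Finset.sum_congr rfl fun j _ => ?_
      rw [hVsym j i x]; ring
    have hA : (∑ i, ∑ j, pd i (fun y => V i j y * v j y) x) * p x
        + (∑ i, ∑ j, bp i x * v j x * V i j x) * p x
        = ∑ i, pd i (F i) x := by
      simp only [Finset.sum_mul, ← Finset.sum_add_distrib]
      refine Finset.sum_congr rfl fun i _ => ?_
      rw [pdF i]
      refine Finset.sum_congr rfl fun j _ => ?_
      rw [h2 i j, ← h3 i]; ring
    rw [hRb, hswap, ← hA]; ring
  -- integrability of the two pieces on D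
  have hSp_cont : Continuous (fun x => (∑ i, ∑ j, v i x * v j x * V i j x) * p x) := by
    apply glue_cont hD hK.isClosed hKD
    · apply ContinuousOn.mul _ hp1.continuousOn
      apply continuousOn_finset_sum
      intro i _
      apply continuousOn_finset_sum
      intro j _
      exact ((hv i).continuousOn.mul (hv j).continuousOn).mul (hV i j).continuousOn
    · intro x hx
      have h0 : ∀ j, v j x = 0 := fun j => hsupp j x hx
      simp [h0]
  have int_Sp : Integrable (fun x => (∑ i, ∑ j, v i x * v j x * V i j x) * p x) := by
    apply hSp_cont.integrable_of_hasCompactSupport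
    apply HasCompactSupport.intro hK
    intro x hx
    have h0 : ∀ j, v j x = 0 := fun j => hsupp j x hx
    simp [h0]
  have int_pdsum : Integrable (fun x => ∑ i, pd i (F i) x) :=
    integrable_finset_sum _ (fun i _ => int_pd i)
  -- compute the integral
  have main : (∫ x in D, (Rb V (fun i y => bp i y + v i y) x - Rb V bp x) * p x)
      = (1/2) * ∫ x in D, (∑ i, ∑ j, v i x * v j x * V i j x) * p x := by
    rw [setIntegral_congr_fun hD.measurableSet key]
    rw [integral_add int_pdsum.integrableOn
      ((int_Sp.const_mul (1/2)).integrableOn)]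
    have e0 : (∫ x in D, ∑ i, pd i (F i) x) = 0 := by
      rw [setIntegral_eq_integral_of_forall_compl_eq_zero
        (fun x hx => ?_)]
      · rw [integral_finset_sum _ (fun i _ => int_pd i)]
        simp [hzero]
      · have hxK : x ∉ K := fun h => hx (hKD h)
        simp [hpd0 _ x hxK]
    rw [e0, zero_add, integral_const_mul]
  refine ⟨main, ?_⟩
  apply mul_nonneg (by norm_num)
  apply setIntegral_nonneg hD.measurableSet
  intro x hx
  exact mul_nonneg (hVpsd x hx (fun i => v i x)) (hppos x hx).le
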